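/- For probability measures μ on ℝ^p, ν on ℝ^q, υ₁ on ℝ^p, υ₂ on ℝ^q with finite second moments, W₂²(μ ⊗ ν, υ₁ ⊗ υ₂) = W₂²(μ, υ₁) + W₂²(ν, υ₂), i.e., the squared 2-Wasserstein distance between product measures decomposes as the sum of the squared distances between the factors. -/

import Mathlib

open MeasureTheory

/-- The set of couplings of two measures. -/
def Couplings {α β : Type*} [MeasurableSpace α] [MeasurableSpace β]
    (μ : Measure α) (ν : Measure β) : Set (Measure (α × β)) :=
  {γ | γ.map Prod.fst = μ ∧ γ.map Prod.snd = ν}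

/-- Squared 2-Wasserstein distance between measures on ℝ^n (Euclidean cost). -/
noncomputable def W2sq {n : ℕ} (μ ν : Measure (Fin n → ℝ)) : ℝ :=
  sInf { c | ∃ γ ∈ Couplings μ ν,
    c = ∫ w, (∑ i, (w.1 i - w.2 i) ^ 2) ∂γ }

/-- Finite second moment. -/
def HasFiniteSecondMoment {n : ℕ} (μ : Measure (Fin n → ℝ)) : Prop :=
  Integrable (fun x => ∑ i, (x i) ^ 2) μ

/-- Concatenation map `(ℝ^p) × (ℝ^q) → ℝ^(p+q)`. -/
def pairToVec (p q : ℕ) : (Fin p → ℝ) × (Fin q → ℝ) → (Fin (p + q) → ℝ) :=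
  fun z => Fin.append z.1 z.2

section Aux

open Measure

/-- The quadratic transport cost on `ℝ^n × ℝ^n`. -/
noncomputable def qcost (n : ℕ) : (Fin n → ℝ) × (Fin n → ℝ) → ℝ :=
  fun w => ∑ i, (w.1 i - w.2 i) ^ 2

lemma continuous_qcost (n : ℕ) : Continuous (qcost n) := by
  unfold qcost; fun_prop

lemma qcost_nonneg (n : ℕ) (w : (Fin n → ℝ) × (Fin n → ℝ)) : 0 ≤ qcost n w :=
  Finset.sum_nonneg fun _ _ => sq_nonneg _

lemma continuous_sqnorm (n : ℕ) : Continuous (fun x : Fin n → ℝ => ∑ i, (x i) ^ 2) := by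
  fun_prop

lemma measurable_pairToVec (p q : ℕ) : Measurable (pairToVec p q) := by
  apply measurable_pi_lambda
  intro i
  refine Fin.addCases (motive := fun i => Measurable fun z => pairToVec p q z i)
    (fun i => ?_) (fun i => ?_) i
  · simp only [pairToVec, Fin.append_left]
    exact (measurable_pi_apply i).comp measurable_fst
  · simp only [pairToVec, Fin.append_right]
    exact (measurable_pi_apply i).comp measurable_snd

lemma isProb_of_coupling {α β : Type*} [MeasurableSpace α] [MeasurableSpace β]
    {μ : Measure α} {ν : Measure β} [IsProbabilityMeasure μ]
    {γ : Measure (α × β)} (hγ : γ ∈ Couplings μ ν) : IsProbabilityMeasure γ := by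
  constructor
  have h := congrArg (fun m : Measure α => m Set.univ) hγ.1
  simp only [Measure.map_apply measurable_fst MeasurableSet.univ, Set.preimage_univ,
    measure_univ] at h
  exact h

lemma map_fst_prod_prob {α β : Type*} [MeasurableSpace α] [MeasurableSpace β]
    (μ : Measure α) (ν : Measure β) [SFinite ν] [IsProbabilityMeasure ν] :
    Measure.map Prod.fst (μ.prod ν) = μ := by
  rw [Measure.map_fst_prod, measure_univ, one_smul]

lemma map_snd_prod_prob {α β : Type*} [MeasurableSpace α] [MeasurableSpace β]
    (μ : Measure α) (ν : Measure β) [SFinite ν] [IsProbabilityMeasure μ] :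
    Measure.map Prod.snd (μ.prod ν) = ν := by
  rw [Measure.map_snd_prod, measure_univ, one_smul]

lemma integrable_comp_fst' {α β : Type*} [MeasurableSpace α] [MeasurableSpace β]
    {μ : Measure α} {ν : Measure β} [SFinite μ] [SFinite ν] [IsProbabilityMeasure ν]
    {f : α → ℝ} (hf : AEStronglyMeasurable f μ) (h : Integrable f μ) :
    Integrable (fun z : α × β => f z.1) (μ.prod ν) := by
  have hm : Measure.map Prod.fst (μ.prod ν) = μ := map_fst_prod_prob μ ν
  rw [← hm] at h hf
  exact (integrable_map_measure hf measurable_fst.aemeasurable).mp h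

lemma integrable_comp_snd' {α β : Type*} [MeasurableSpace α] [MeasurableSpace β]
    {μ : Measure α} {ν : Measure β} [SFinite μ] [SFinite ν] [IsProbabilityMeasure μ]
    {f : β → ℝ} (hf : AEStronglyMeasurable f ν) (h : Integrable f ν) :
    Integrable (fun z : α × β => f z.2) (μ.prod ν) := by
  have hm : Measure.map Prod.snd (μ.prod ν) = ν := map_snd_prod_prob μ ν
  rw [← hm] at h hf
  exact (integrable_map_measure hf measurable_snd.aemeasurable).mp h

lemma integral_comp_fst' {α β : Type*} [MeasurableSpace α] [MeasurableSpace β]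
    {μ : Measure α} {ν : Measure β} [SFinite μ] [SFinite ν] [IsProbabilityMeasure ν]
    {f : α → ℝ} (hf : AEStronglyMeasurable f μ) :
    ∫ z, f z.1 ∂(μ.prod ν) = ∫ x, f x ∂μ := by
  have hm : Measure.map Prod.fst (μ.prod ν) = μ := map_fst_prod_prob μ ν
  conv_rhs => rw [← hm]
  rw [← hm] at hf
  exact (integral_map measurable_fst.aemeasurable hf).symm

lemma integral_comp_snd' {α β : Type*} [MeasurableSpace α] [MeasurableSpace β]
    {μ : Measure α} {ν : Measure β} [SFinite μ] [SFinite ν] [IsProbabilityMeasure μ]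
    {f : β → ℝ} (hf : AEStronglyMeasurable f ν) :
    ∫ z, f z.2 ∂(μ.prod ν) = ∫ x, f x ∂ν := by
  have hm : Measure.map Prod.snd (μ.prod ν) = ν := map_snd_prod_prob μ ν
  conv_rhs => rw [← hm]
  rw [← hm] at hf
  exact (integral_map measurable_snd.aemeasurable hf).symm

/-- Any coupling of probability measures with finite second moments has integrable
quadratic cost. -/
lemma integrable_qcost {n : ℕ} {μ ν : Measure (Fin n → ℝ)}
    [IsProbabilityMeasure μ] [IsProbabilityMeasure ν]
    (hμ : HasFiniteSecondMoment μ) (hν : HasFiniteSecondMoment ν)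
    {γ : Measure ((Fin n → ℝ) × (Fin n → ℝ))} (hγ : γ ∈ Couplings μ ν) :
    Integrable (qcost n) γ := by
  haveI : IsProbabilityMeasure γ := isProb_of_coupling hγ
  have h1 : Integrable (fun w : (Fin n → ℝ) × (Fin n → ℝ) => ∑ i, (w.1 i) ^ 2) γ := by
    have hμ' : Integrable (fun x => ∑ i, (x i) ^ 2) (γ.map Prod.fst) := hγ.1 ▸ hμ
    exact (integrable_map_measure ((continuous_sqnorm n).aestronglyMeasurable)
      measurable_fst.aemeasurable).mp hμ'
  have h2 : Integrable (fun w : (Fin n → ℝ) × (Fin n → ℝ) => ∑ i, (w.2 i) ^ 2) γ := by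
    have hν' : Integrable (fun x => ∑ i, (x i) ^ 2) (γ.map Prod.snd) := hγ.2 ▸ hν
    exact (integrable_map_measure ((continuous_sqnorm n).aestronglyMeasurable)
      measurable_snd.aemeasurable).mp hν'
  have hbound : Integrable
      (fun w : (Fin n → ℝ) × (Fin n → ℝ) => 2 * ∑ i, (w.1 i) ^ 2 + 2 * ∑ i, (w.2 i) ^ 2) γ :=
    (h1.const_mul 2).add (h2.const_mul 2)
  refine hbound.mono ((continuous_qcost n).aestronglyMeasurable) ?_
  filter_upwards with w
  have hle : qcost n w ≤ 2 * ∑ i, (w.1 i) ^ 2 + 2 * ∑ i, (w.2 i) ^ 2 := by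
    unfold qcost
    rw [Finset.mul_sum, Finset.mul_sum, ← Finset.sum_add_distrib]
    refine Finset.sum_le_sum fun i _ => ?_
    nlinarith [sq_nonneg (w.1 i + w.2 i)]
  have h0 : 0 ≤ qcost n w := qcost_nonneg n w
  have h0' : (0:ℝ) ≤ 2 * ∑ i, (w.1 i) ^ 2 + 2 * ∑ i, (w.2 i) ^ 2 := le_trans h0 hle
  simpa [Real.norm_eq_abs, abs_of_nonneg h0, abs_of_nonneg h0'] using hle

/-- The set defining `W2sq`. -/
def W2set {n : ℕ} (μ ν : Measure (Fin n → ℝ)) : Set ℝ :=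
  { c | ∃ γ ∈ Couplings μ ν, c = ∫ w, (∑ i, (w.1 i - w.2 i) ^ 2) ∂γ }

lemma W2sq_eq_sInf {n : ℕ} (μ ν : Measure (Fin n → ℝ)) : W2sq μ ν = sInf (W2set μ ν) := rfl

lemma W2set_nonempty {n : ℕ} (μ ν : Measure (Fin n → ℝ))
    [IsProbabilityMeasure μ] [IsProbabilityMeasure ν] : (W2set μ ν).Nonempty :=
  ⟨_, μ.prod ν, ⟨map_fst_prod_prob μ ν, map_snd_prod_prob μ ν⟩, rfl⟩

lemma W2set_bddBelow {n : ℕ} (μ ν : Measure (Fin n → ℝ)) : BddBelow (W2set μ ν) := by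
  refine ⟨0, fun c hc => ?_⟩
  obtain ⟨γ, _, rfl⟩ := hc
  exact integral_nonneg fun w => Finset.sum_nonneg fun _ _ => sq_nonneg _

lemma qcost_append (p q : ℕ) (a c : Fin p → ℝ) (b d : Fin q → ℝ) :
    qcost (p + q) (Fin.append a b, Fin.append c d) = qcost p (a, c) + qcost q (b, d) := by
  unfold qcost
  rw [Fin.sum_univ_add]
  simp [Fin.append_left, Fin.append_right]

end Aux

/-- `W₂²(μ ⊗ ν, υ₁ ⊗ υ₂) = W₂²(μ, υ₁) + W₂²(ν, υ₂)`. -/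
theorem W2sq_prod_add (p q : ℕ)
    (μ υ₁ : Measure (Fin p → ℝ)) [IsProbabilityMeasure μ] [IsProbabilityMeasure υ₁]
    (ν υ₂ : Measure (Fin q → ℝ)) [IsProbabilityMeasure ν] [IsProbabilityMeasure υ₂]
    (hμ : HasFiniteSecondMoment μ) (hν : HasFiniteSecondMoment ν)
    (hυ₁ : HasFiniteSecondMoment υ₁) (hυ₂ : HasFiniteSecondMoment υ₂) :
    W2sq ((μ.prod ν).map (pairToVec p q)) ((υ₁.prod υ₂).map (pairToVec p q)) =
      W2sq μ υ₁ + W2sq ν υ₂ := by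
  haveI : IsProbabilityMeasure ((μ.prod ν).map (pairToVec p q)) :=
    Measure.isProbabilityMeasure_map (measurable_pairToVec p q).aemeasurable
  haveI : IsProbabilityMeasure ((υ₁.prod υ₂).map (pairToVec p q)) :=
    Measure.isProbabilityMeasure_map (measurable_pairToVec p q).aemeasurable
  set μ' := (μ.prod ν).map (pairToVec p q) with hμ'def
  set υ' := (υ₁.prod υ₂).map (pairToVec p q) with hυ'def
  rw [W2sq_eq_sInf, W2sq_eq_sInf, W2sq_eq_sInf]
  -- Upper bound: for any couplings γ₁ of (μ, υ₁) and γ₂ of (ν, υ₂), we build a coupling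
  -- of (μ', υ') with cost equal to the sum of the costs.
  have key : ∀ c₁ ∈ W2set μ υ₁, ∀ c₂ ∈ W2set ν υ₂,
      sInf (W2set μ' υ') ≤ c₁ + c₂ := by
    rintro c₁ ⟨γ₁, hγ₁, rfl⟩ c₂ ⟨γ₂, hγ₂, rfl⟩
    haveI : IsProbabilityMeasure γ₁ := isProb_of_coupling hγ₁
    haveI : IsProbabilityMeasure γ₂ := isProb_of_coupling hγ₂
    set T : ((Fin p → ℝ) × (Fin p → ℝ)) × ((Fin q → ℝ) × (Fin q → ℝ)) →
        (Fin (p + q) → ℝ) × (Fin (p + q) → ℝ) :=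
      fun z => (pairToVec p q (z.1.1, z.2.1), pairToVec p q (z.1.2, z.2.2)) with hTdef
    have hT : Measurable T := by
      refine Measurable.prodMk ?_ ?_
      · exact (measurable_pairToVec p q).comp (measurable_fst.fst.prodMk measurable_snd.fst)
      · exact (measurable_pairToVec p q).comp (measurable_fst.snd.prodMk measurable_snd.snd)
    set Γ := (γ₁.prod γ₂).map T with hΓdef
    have hmapfst : Γ.map Prod.fst = μ' := by
      rw [hΓdef, Measure.map_map measurable_fst hT]
      have h1 : (Prod.fst ∘ T) = pairToVec p q ∘ Prod.map Prod.fst Prod.fst := rfl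
      rw [h1, ← Measure.map_map (measurable_pairToVec p q)
        (measurable_fst.prodMap measurable_fst),
        ← Measure.map_prod_map _ _ measurable_fst measurable_fst, hγ₁.1, hγ₂.1]
    have hmapsnd : Γ.map Prod.snd = υ' := by
      rw [hΓdef, Measure.map_map measurable_snd hT]
      have h1 : (Prod.snd ∘ T) = pairToVec p q ∘ Prod.map Prod.snd Prod.snd := rfl
      rw [h1, ← Measure.map_map (measurable_pairToVec p q)
        (measurable_snd.prodMap measurable_snd),
        ← Measure.map_prod_map _ _ measurable_snd measurable_snd, hγ₁.2, hγ₂.2]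
    have hint : (∫ w, (∑ i, (w.1 i - w.2 i) ^ 2) ∂Γ)
        = (∫ w, (∑ i, (w.1 i - w.2 i) ^ 2) ∂γ₁) + ∫ w, (∑ i, (w.1 i - w.2 i) ^ 2) ∂γ₂ := by
      show (∫ w, qcost (p + q) w ∂Γ) = (∫ w, qcost p w ∂γ₁) + ∫ w, qcost q w ∂γ₂
      rw [hΓdef, integral_map hT.aemeasurable
        ((continuous_qcost (p + q)).aestronglyMeasurable)]
      have hTc : ∀ z, qcost (p + q) (T z) = qcost p z.1 + qcost q z.2 := by
        intro z
        rw [hTdef]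
        exact qcost_append p q z.1.1 z.1.2 z.2.1 z.2.2
      simp_rw [hTc]
      rw [integral_add
        (integrable_comp_fst' ((continuous_qcost p).aestronglyMeasurable)
          (integrable_qcost hμ hυ₁ hγ₁))
        (integrable_comp_snd' ((continuous_qcost q).aestronglyMeasurable)
          (integrable_qcost hν hυ₂ hγ₂)),
        integral_comp_fst' ((continuous_qcost p).aestronglyMeasurable),
        integral_comp_snd' ((continuous_qcost q).aestronglyMeasurable)]
    exact hint ▸ csInf_le (W2set_bddBelow μ' υ') ⟨Γ, ⟨hmapfst, hmapsnd⟩, rfl⟩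
  -- Lower bound: any coupling Γ of (μ', υ') projects to couplings of the factors.
  have lower : sInf (W2set μ υ₁) + sInf (W2set ν υ₂) ≤ sInf (W2set μ' υ') := by
    refine le_csInf (W2set_nonempty μ' υ') ?_
    rintro c ⟨Γ, hΓ, rfl⟩
    set P1 : (Fin (p + q) → ℝ) → (Fin p → ℝ) := fun w i => w (Fin.castAdd q i) with hP1def
    set P2 : (Fin (p + q) → ℝ) → (Fin q → ℝ) := fun w j => w (Fin.natAdd p j) with hP2def
    have hP1 : Measurable P1 := measurable_pi_lambda _ fun i => measurable_pi_apply _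
    have hP2 : Measurable P2 := measurable_pi_lambda _ fun j => measurable_pi_apply _
    have hP1pair : P1 ∘ pairToVec p q = Prod.fst := by
      funext z
      funext i
      simp [hP1def, pairToVec, Fin.append_left]
    have hP2pair : P2 ∘ pairToVec p q = Prod.snd := by
      funext z
      funext j
      simp [hP2def, pairToVec, Fin.append_right]
    set γ₁ := Γ.map (Prod.map P1 P1) with hγ₁def
    set γ₂ := Γ.map (Prod.map P2 P2) with hγ₂def
    have hγ₁ : γ₁ ∈ Couplings μ υ₁ := by
      constructor
      · rw [hγ₁def, Measure.map_map measurable_fst (hP1.prodMap hP1)]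
        have h1 : (Prod.fst ∘ Prod.map P1 P1) = P1 ∘ Prod.fst := rfl
        rw [h1, ← Measure.map_map hP1 measurable_fst, hΓ.1, hμ'def,
          Measure.map_map hP1 (measurable_pairToVec p q), hP1pair, map_fst_prod_prob μ ν]
      · rw [hγ₁def, Measure.map_map measurable_snd (hP1.prodMap hP1)]
        have h1 : (Prod.snd ∘ Prod.map P1 P1) = P1 ∘ Prod.snd := rfl
        rw [h1, ← Measure.map_map hP1 measurable_snd, hΓ.2, hυ'def,
          Measure.map_map hP1 (measurable_pairToVec p q), hP1pair, map_fst_prod_prob υ₁ υ₂]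
    have hγ₂ : γ₂ ∈ Couplings ν υ₂ := by
      constructor
      · rw [hγ₂def, Measure.map_map measurable_fst (hP2.prodMap hP2)]
        have h1 : (Prod.fst ∘ Prod.map P2 P2) = P2 ∘ Prod.fst := rfl
        rw [h1, ← Measure.map_map hP2 measurable_fst, hΓ.1, hμ'def,
          Measure.map_map hP2 (measurable_pairToVec p q), hP2pair, map_snd_prod_prob μ ν]
      · rw [hγ₂def, Measure.map_map measurable_snd (hP2.prodMap hP2)]
        have h1 : (Prod.snd ∘ Prod.map P2 P2) = P2 ∘ Prod.snd := rfl
        rw [h1, ← Measure.map_map hP2 measurable_snd, hΓ.2, hυ'def,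
          Measure.map_map hP2 (measurable_pairToVec p q), hP2pair, map_snd_prod_prob υ₁ υ₂]
    have hsplit : ∀ w : (Fin (p + q) → ℝ) × (Fin (p + q) → ℝ),
        qcost (p + q) w = qcost p (Prod.map P1 P1 w) + qcost q (Prod.map P2 P2 w) := by
      intro w
      unfold qcost
      rw [Fin.sum_univ_add]
      rfl
    have hi₁ : Integrable (fun w => qcost p (Prod.map P1 P1 w)) Γ := by
      have := integrable_qcost hμ hυ₁ hγ₁
      rw [hγ₁def] at this
      exact (integrable_map_measure ((continuous_qcost p).aestronglyMeasurable)
        (hP1.prodMap hP1).aemeasurable).mp this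
    have hi₂ : Integrable (fun w => qcost q (Prod.map P2 P2 w)) Γ := by
      have := integrable_qcost hν hυ₂ hγ₂
      rw [hγ₂def] at this
      exact (integrable_map_measure ((continuous_qcost q).aestronglyMeasurable)
        (hP2.prodMap hP2).aemeasurable).mp this
    have hint : (∫ w, (∑ i, (w.1 i - w.2 i) ^ 2) ∂Γ)
        = (∫ w, (∑ i, (w.1 i - w.2 i) ^ 2) ∂γ₁) + ∫ w, (∑ i, (w.1 i - w.2 i) ^ 2) ∂γ₂ := by
      show (∫ w, qcost (p + q) w ∂Γ) = (∫ w, qcost p w ∂γ₁) + ∫ w, qcost q w ∂γ₂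
      simp_rw [hsplit]
      rw [integral_add hi₁ hi₂, hγ₁def, hγ₂def,
        integral_map (hP1.prodMap hP1).aemeasurable
          ((continuous_qcost p).aestronglyMeasurable),
        integral_map (hP2.prodMap hP2).aemeasurable
          ((continuous_qcost q).aestronglyMeasurable)]
    rw [hint]
    exact add_le_add (csInf_le (W2set_bddBelow μ υ₁) ⟨γ₁, hγ₁, rfl⟩)
      (csInf_le (W2set_bddBelow ν υ₂) ⟨γ₂, hγ₂, rfl⟩)
  refine le_antisymm ?_ lower
  have h2 : ∀ c₂ ∈ W2set ν υ₂, sInf (W2set μ' υ') - c₂ ≤ sInf (W2set μ υ₁) := by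
    intro c₂ hc₂
    refine le_csInf (W2set_nonempty μ υ₁) fun c₁ hc₁ => ?_
    linarith [key c₁ hc₁ c₂ hc₂]
  have h3 : sInf (W2set μ' υ') - sInf (W2set μ υ₁) ≤ sInf (W2set ν υ₂) := by
    refine le_csInf (W2set_nonempty ν υ₂) fun c₂ hc₂ => ?_
    linarith [h2 c₂ hc₂]
  linarith
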